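/- Let T be a triangulated category and C, C′, M objects of T. If M lies in the n-th thickening thick^n_T(C) of C and C lies in the l-th thickening thick^l_T(C′) of C′, then M lies in thick^{nl}_T(C′). Equivalently, level^{C′}_T(M) ≤ level^C_T(M) · level^{C′}_T(C). -/

import Mathlib

open CategoryTheory CategoryTheory.Limits CategoryTheory.Pretriangulated
open CategoryTheory.Category ZeroObject
set_option linter.unusedSectionVars false
set_option linter.unusedVariables false

universe v u

variable {T : Type u} [Category.{v} T] [Preadditive T] [HasZeroObject T]
  [HasShift T ℤ] [∀ n : ℤ, (CategoryTheory.shiftFunctor T n).Additive]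
  [HasBinaryBiproducts T] [Pretriangulated T]

/-- The objects of the smallest strict full subcategory containing `C` that is closed under
finite coproducts, retracts and all shifts (the first thickening `thick¹(C)`). -/
inductive thickOne (C : T) : T → Prop
  | base : thickOne C C
  | zero (X : T) : IsZero X → thickOne C X
  | shift (X : T) (n : ℤ) : thickOne C X → thickOne C (X⟦n⟧)
  | coprod (X Y : T) : thickOne C X → thickOne C Y → thickOne C (X ⊞ Y)
  | retract (X Y : T) (i : X ⟶ Y) (r : Y ⟶ X) : i ≫ r = 𝟙 X → thickOne C Y → thickOne C X
  | iso (X Y : T) (e : X ≅ Y) : thickOne C X → thickOne C Y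

/-- The objects of `addΣ(C)`: the smallest full subcategory containing `C` closed under
finite coproducts, all shifts and isomorphisms (no retracts). -/
inductive addShift (C : T) : T → Prop
  | base : addShift C C
  | zero (X : T) : IsZero X → addShift C X
  | shift (X : T) (n : ℤ) : addShift C X → addShift C (X⟦n⟧)
  | coprod (X Y : T) : addShift C X → addShift C Y → addShift C (X ⊞ Y)
  | iso (X Y : T) (e : X ≅ Y) : addShift C X → addShift C Y

/-- Closure of a class of objects under retracts (direct summands). -/
def smd (A : Set T) : Set T :=
  {X | ∃ Y ∈ A, ∃ (i : X ⟶ Y) (r : Y ⟶ X), i ≫ r = 𝟙 X}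

/-- The ∗-product: objects `L` occurring in a distinguished triangle `M → L → N → ΣM`
with `M ∈ A` and `N ∈ B`. -/
def star (A B : Set T) : Set T :=
  {L | ∃ (M N : T) (f : M ⟶ L) (g : L ⟶ N) (h : N ⟶ M⟦(1 : ℤ)⟧),
    M ∈ A ∧ N ∈ B ∧ Triangle.mk f g h ∈ distTriang T}

/-- The `n`-th thickening `thickⁿ(C)` of an object `C` in a triangulated category. -/
def thickN (C : T) : ℕ → Set T
  | 0 => {X | IsZero X}
  | 1 => {X | thickOne C X}
  | n + 2 => smd (star (thickN C (n + 1)) {X | thickOne C X})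

/-- The `C`-level of `M`: the least `n` such that `M ∈ thickⁿ(C)` (`⊤` if there is none). -/
noncomputable def level (C M : T) : ℕ∞ :=
  sInf ((fun n : ℕ => (n : ℕ∞)) '' {n : ℕ | M ∈ thickN C n})


lemma complete_hom₂ {X L Y X' L' Y' : T} (f : X ⟶ L) (g : L ⟶ Y) (h : Y ⟶ X⟦(1:ℤ)⟧)
    (f' : X' ⟶ L') (g' : L' ⟶ Y') (h' : Y' ⟶ X'⟦(1:ℤ)⟧)
    (hT : Triangle.mk f g h ∈ distTriang T) (hT' : Triangle.mk f' g' h' ∈ distTriang T)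
    (a : X ⟶ X') (c : Y ⟶ Y') (comm : c ≫ h' = h ≫ a⟦(1:ℤ)⟧') :
    ∃ b : L ⟶ L', f ≫ b = a ≫ f' ∧ b ≫ g' = g ≫ c := by
  obtain ⟨b, hb₁, hb₂⟩ := complete_distinguished_triangle_morphism _ _
    (inv_rot_of_distTriang _ hT) (inv_rot_of_distTriang _ hT')
    (c⟦(-1:ℤ)⟧') a (by
      change (-(h⟦(-1:ℤ)⟧') ≫ (shiftFunctorCompIsoId T (1:ℤ) (-1) (by omega)).hom.app X) ≫ a =
        c⟦(-1:ℤ)⟧' ≫ (-(h'⟦(-1:ℤ)⟧') ≫ (shiftFunctorCompIsoId T (1:ℤ) (-1) (by omega)).hom.app X')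
      simp only [Preadditive.neg_comp, Preadditive.comp_neg, neg_inj, assoc]
      rw [← Functor.map_comp_assoc, comm, Functor.map_comp, assoc]
      congr 1
      exact ((shiftFunctorCompIsoId T (1:ℤ) (-1) (by omega)).hom.naturality a).symm)
  change L ⟶ L' at b
  change f ≫ b = a ≫ f' at hb₁
  change (g ≫ (shiftFunctorCompIsoId T (-1) 1 (by omega)).inv.app Y) ≫ c⟦(-1:ℤ)⟧'⟦(1:ℤ)⟧' =
    b ≫ g' ≫ (shiftFunctorCompIsoId T (-1) 1 (by omega)).inv.app Y' at hb₂
  refine ⟨b, hb₁, ?_⟩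
  have hnat := (shiftFunctorCompIsoId T (-1) 1 (by omega)).inv.naturality c
  dsimp at hnat
  simp only [assoc] at hb₂
  have h2 : (g ≫ c) ≫ (shiftFunctorCompIsoId T (-1) 1 (by omega)).inv.app Y' =
      (b ≫ g') ≫ (shiftFunctorCompIsoId T (-1) 1 (by omega)).inv.app Y' := by
    simp only [assoc]
    rw [hnat]
    rw [← assoc, ← assoc] at hb₂ ⊢
    exact hb₂
  exact ((cancel_mono _).mp h2).symm

/-- key retract lemma: extending a retract on the third object to the middle object. -/
lemma star_retract {X L Y Y' : T} (f : X ⟶ L) (g : L ⟶ Y) (h : Y ⟶ X⟦(1:ℤ)⟧)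
    (hT : Triangle.mk f g h ∈ distTriang T) (i : Y ⟶ Y') (r : Y' ⟶ Y) (hir : i ≫ r = 𝟙 Y) :
    ∃ (L' : T) (f' : X ⟶ L') (g' : L' ⟶ Y') (i' : L ⟶ L') (r' : L' ⟶ L),
      (Triangle.mk f' g' (r ≫ h) ∈ distTriang T) ∧ i' ≫ r' = 𝟙 L := by
  obtain ⟨L', f', g', hT'⟩ := distinguished_cocone_triangle₂ (r ≫ h)
  obtain ⟨φ, hφ₁, hφ₂⟩ := complete_hom₂ f g h f' g' (r ≫ h) hT hT' (𝟙 X) i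
    (by rw [← assoc, hir, id_comp, CategoryTheory.Functor.map_id, comp_id])
  obtain ⟨ψ, hψ₁, hψ₂⟩ := complete_hom₂ f' g' (r ≫ h) f g h hT' hT (𝟙 X) r
    (by rw [CategoryTheory.Functor.map_id, comp_id])
  rw [id_comp] at hφ₁ hψ₁
  have he_g : (φ ≫ ψ) ≫ g = g := by
    rw [assoc, hψ₂, ← assoc, hφ₂, assoc, hir, comp_id]
  have hf_e : f ≫ φ ≫ ψ = f := by rw [← assoc, hφ₁, hψ₁]
  obtain ⟨(α : L ⟶ X), hα⟩ := Triangle.coyoneda_exact₂ _ hT (𝟙 L - φ ≫ ψ)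
    (by change (𝟙 L - φ ≫ ψ) ≫ g = 0; rw [Preadditive.sub_comp, id_comp, he_g, sub_self])
  change 𝟙 L - φ ≫ ψ = α ≫ f at hα
  refine ⟨L', f', g', (𝟙 L + α ≫ f) ≫ φ, ψ, hT', ?_⟩
  calc ((𝟙 L + α ≫ f) ≫ φ) ≫ ψ = φ ≫ ψ + α ≫ (f ≫ φ ≫ ψ) := by
        simp only [Preadditive.add_comp, id_comp, assoc]
    _ = φ ≫ ψ + α ≫ f := by rw [hf_e]
    _ = φ ≫ ψ + (𝟙 L - φ ≫ ψ) := by rw [← hα]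
    _ = 𝟙 L := by abel

/-- octahedron lemma: associativity-style fiber decomposition. -/
lemma star_octa [IsTriangulated T] {X L Y B₀ D₀ : T}
    (f : X ⟶ L) (g : L ⟶ Y) (h : Y ⟶ X⟦(1:ℤ)⟧) (hT : Triangle.mk f g h ∈ distTriang T)
    (u : B₀ ⟶ Y) (v : Y ⟶ D₀) (w : D₀ ⟶ B₀⟦(1:ℤ)⟧) (hT' : Triangle.mk u v w ∈ distTriang T) :
    ∃ (E : T) (a : E ⟶ L) (b : L ⟶ D₀) (c : D₀ ⟶ E⟦(1:ℤ)⟧)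
      (M N : T) (a' : M ⟶ E) (b' : E ⟶ N) (c' : N ⟶ M⟦(1:ℤ)⟧)
      (_ : M ≅ X) (_ : N ≅ B₀),
      (Triangle.mk a b c ∈ distTriang T) ∧ Triangle.mk a' b' c' ∈ distTriang T := by
  obtain ⟨Z, v₁₃, w₁₃, hZ⟩ := distinguished_cocone_triangle (g ≫ v)
  have h12 : Triangle.mk g h (-f⟦(1:ℤ)⟧') ∈ distTriang T := rot_of_distTriang _ hT
  have h23 : Triangle.mk v w (-u⟦(1:ℤ)⟧') ∈ distTriang T := rot_of_distTriang _ hT'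
  have oct := Triangulated.someOctahedron (u₁₂ := g) (u₂₃ := v) (u₁₃ := g ≫ v) rfl h12 h23 hZ
  have hS₁ : (Triangle.mk (g ≫ v) v₁₃ w₁₃).invRotate ∈ distTriang T :=
    inv_rot_of_distTriang _ hZ
  have hS₂ : (Triangle.mk oct.m₁ oct.m₃ ((-u⟦(1:ℤ)⟧') ≫ h⟦(1:ℤ)⟧')).invRotate.invRotate.invRotate
      ∈ distTriang T :=
    inv_rot_of_distTriang _ (inv_rot_of_distTriang _ (inv_rot_of_distTriang _ oct.mem))
  refine ⟨Z⟦(-1:ℤ)⟧, _, _, _, X⟦(1:ℤ)⟧⟦(-1:ℤ)⟧, B₀⟦(1:ℤ)⟧⟦(-1:ℤ)⟧, _, _, _,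
    (shiftEquiv T (1:ℤ)).unitIso.symm.app X, (shiftEquiv T (1:ℤ)).unitIso.symm.app B₀,
    hS₁, hS₂⟩

lemma thickN_cast {C : T} {m n : ℕ} (h : m = n) {X : T} (hX : X ∈ thickN C m) :
    X ∈ thickN C n := h ▸ hX

lemma thickN_iso {C : T} : ∀ (n : ℕ) {X Y : T}, (X ≅ Y) → X ∈ thickN C n → Y ∈ thickN C n
  | 0, X, Y, e, hX => hX.of_iso e.symm
  | 1, X, Y, e, hX => thickOne.iso X Y e hX
  | (n+2), X, Y, e, hX => by
      obtain ⟨L, hL, i, r, hir⟩ := hX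
      exact ⟨L, hL, e.inv ≫ i, r ≫ e.hom, by
        rw [assoc, ← assoc i r, hir, id_comp, e.inv_hom_id]⟩

lemma thickN_zero {C : T} : ∀ (n : ℕ) {X : T}, IsZero X → X ∈ thickN C n
  | 0, X, hX => hX
  | 1, X, hX => thickOne.zero X hX
  | (n+2), X, hX =>
      ⟨X, ⟨X, 0, 𝟙 X, 0, 0, thickN_zero (n+1) hX,
        thickOne.zero _ (isZero_zero T), contractible_distinguished X⟩, 𝟙 X, 𝟙 X, id_comp _⟩

lemma thickN_retract {C : T} : ∀ (n : ℕ) {X Y : T} (i : X ⟶ Y) (r : Y ⟶ X),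
    i ≫ r = 𝟙 X → Y ∈ thickN C n → X ∈ thickN C n
  | 0, X, Y, i, r, hir, hY => by
      have hY' : IsZero Y := hY
      show IsZero X
      rw [IsZero.iff_id_eq_zero, ← hir, hY'.eq_of_tgt i 0, zero_comp]
  | 1, X, Y, i, r, hir, hY => thickOne.retract X Y i r hir hY
  | (n+2), X, Y, i, r, hir, hY => by
      obtain ⟨L, hL, i', r', hir'⟩ := hY
      exact ⟨L, hL, i ≫ i', r' ≫ r, by
        rw [assoc, ← assoc i' r', hir', id_comp, hir]⟩

lemma thickN_shift {C : T} : ∀ (n : ℕ) (k : ℤ) {X : T}, X ∈ thickN C n → X⟦k⟧ ∈ thickN C n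
  | 0, k, X, hX => by
      have hX' : IsZero X := hX
      show IsZero (X⟦k⟧)
      rw [IsZero.iff_id_eq_zero] at hX' ⊢
      rw [← CategoryTheory.Functor.map_id, hX', Functor.map_zero]
  | 1, k, X, hX => thickOne.shift X k hX
  | (n+2), k, X, hX => by
      obtain ⟨L, ⟨M, N, f, g, h, hM, hN, hdist⟩, i, r, hir⟩ := hX
      have hTs : (Triangle.shiftFunctor T k).obj (Triangle.mk f g h) ∈ distTriang T :=
        Triangle.shift_distinguished _ hdist k
      refine ⟨L⟦k⟧, ⟨M⟦k⟧, N⟦k⟧, ((Triangle.shiftFunctor T k).obj (Triangle.mk f g h)).mor₁,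
        ((Triangle.shiftFunctor T k).obj (Triangle.mk f g h)).mor₂,
        ((Triangle.shiftFunctor T k).obj (Triangle.mk f g h)).mor₃,
        thickN_shift (n+1) k hM, thickOne.shift N k hN, hTs⟩,
        i⟦k⟧', r⟦k⟧', by rw [← Functor.map_comp, hir, CategoryTheory.Functor.map_id]⟩

lemma thickN_le {C : T} : ∀ (n : ℕ) {X : T}, X ∈ thickN C n → X ∈ thickN C (n+1)
  | 0, X, hX => thickOne.zero X hX
  | 1, X, hX =>
      ⟨X, ⟨X, 0, 𝟙 X, 0, 0, hX, thickOne.zero _ (isZero_zero T),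
        contractible_distinguished X⟩, 𝟙 X, 𝟙 X, id_comp _⟩
  | (n+2), X, hX => by
      obtain ⟨L, ⟨M, N, f, g, h, hM, hN, hdist⟩, i, r, hir⟩ := hX
      exact ⟨L, ⟨M, N, f, g, h, thickN_le (n+1) hM, hN, hdist⟩, i, r, hir⟩

lemma thickN_le' {C : T} {m n : ℕ} (hmn : m ≤ n) {X : T} (hX : X ∈ thickN C m) :
    X ∈ thickN C n := by
  induction hmn with
  | refl => exact hX
  | step _ ih => exact thickN_le _ ih

lemma thickN_biprod {C : T} : ∀ (n : ℕ) {X Y : T},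
    X ∈ thickN C n → Y ∈ thickN C n → (X ⊞ Y) ∈ thickN C n
  | 0, X, Y, hX, hY => (biprod_isZero_iff X Y).mpr ⟨hX, hY⟩
  | 1, X, Y, hX, hY => thickOne.coprod X Y hX hY
  | (n+2), X, Y, hX, hY => by
      obtain ⟨LX, ⟨MX, NX, fX, gX, hX3, hMX, hNX, hdX⟩, iX, rX, hirX⟩ := hX
      obtain ⟨LY, ⟨MY, NY, fY, gY, hY3, hMY, hNY, hdY⟩, iY, rY, hirY⟩ := hY
      set Tf : WalkingPair → Triangle T :=
        fun j => WalkingPair.casesOn j (Triangle.mk fX gX hX3) (Triangle.mk fY gY hY3) with hTf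
      have hprod : productTriangle Tf ∈ distTriang T :=
        productTriangle_distinguished Tf (by rintro (_|_) <;> assumption)
      set P := productTriangle Tf with hP
      have e₁ : P.obj₁ ≅ MX ⊞ MY :=
        (HasLimit.isoOfNatIso (Discrete.natIso (fun j => by
          obtain ⟨_|_⟩ := j <;> exact Iso.refl _))) ≪≫ (biprod.isoProd MX MY).symm
      have e₂ : P.obj₂ ≅ LX ⊞ LY :=
        (HasLimit.isoOfNatIso (Discrete.natIso (fun j => by
          obtain ⟨_|_⟩ := j <;> exact Iso.refl _))) ≪≫ (biprod.isoProd LX LY).symm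
      have e₃ : P.obj₃ ≅ NX ⊞ NY :=
        (HasLimit.isoOfNatIso (Discrete.natIso (fun j => by
          obtain ⟨_|_⟩ := j <;> exact Iso.refl _))) ≪≫ (biprod.isoProd NX NY).symm
      have hQ : Triangle.mk (e₁.inv ≫ P.mor₁ ≫ e₂.hom) (e₂.inv ≫ P.mor₂ ≫ e₃.hom)
          (e₃.inv ≫ P.mor₃ ≫ (e₁.hom)⟦(1:ℤ)⟧') ∈ distTriang T := by
        refine isomorphic_distinguished _ hprod _ (Triangle.isoMk _ _ e₁.symm e₂.symm e₃.symm
          ?_ ?_ ?_)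
        · dsimp; simp
          exact (assoc _ _ _).trans (congrArg (fun k => e₁.inv ≫ k) ((assoc _ _ _).trans
            ((congrArg (fun k => P.mor₁ ≫ k) e₂.hom_inv_id).trans (comp_id _))))
        · dsimp; simp
          exact (assoc _ _ _).trans (congrArg (fun k => e₂.inv ≫ k) ((assoc _ _ _).trans
            ((congrArg (fun k => P.mor₂ ≫ k) e₃.hom_inv_id).trans (comp_id _))))
        · dsimp; simp [← Functor.map_comp]
          exact (assoc _ _ _).trans (congrArg (fun k => e₃.inv ≫ k) ((assoc _ _ _).trans
            ((congrArg (fun k => P.mor₃ ≫ k) (((shiftFunctor T (1:ℤ)).map_comp _ _).symm.trans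
              ((congrArg (fun k => (shiftFunctor T (1:ℤ)).map k) e₁.hom_inv_id).trans
              ((shiftFunctor T (1:ℤ)).map_id _)))).trans (comp_id _))))
      refine ⟨LX ⊞ LY, ⟨MX ⊞ MY, NX ⊞ NY, _, _, _,
        thickN_biprod (n+1) hMX hMY, thickOne.coprod _ _ hNX hNY, hQ⟩,
        biprod.map iX iY, biprod.map rX rY, by ext <;> simp [hirX, hirY]⟩

/-- Additivity: an extension of objects of `thickᵃ` and `thickᵇ` lies in `thickᵃ⁺ᵇ`. -/
lemma thickN_star [IsTriangulated T] {C : T} : ∀ (b a : ℕ) {X L Y : T}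
    (f : X ⟶ L) (g : L ⟶ Y) (h : Y ⟶ X⟦(1:ℤ)⟧),
    (Triangle.mk f g h ∈ distTriang T) → X ∈ thickN C a → Y ∈ thickN C b →
    L ∈ thickN C (a + b)
  | 0, a, X, L, Y, f, g, h, hT, hX, hY => by
      have : IsIso f := (Triangle.isZero₃_iff_isIso₁ _ hT).mp hY
      exact thickN_iso a (asIso f) hX
  | 1, a, X, L, Y, f, g, h, hT, hX, hY => by
      match a, hX with
      | 0, hX =>
        have : IsIso g := (Triangle.isZero₁_iff_isIso₂ _ hT).mp hX
        exact thickN_iso 1 (asIso g).symm hY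
      | (s+1), hX =>
        exact ⟨L, ⟨X, Y, f, g, h, hX, hY, hT⟩, 𝟙 L, 𝟙 L, id_comp _⟩
  | (b+2), a, X, L, Y, f, g, h, hT, hX, hY => by
      obtain ⟨Y', hY', i, r, hir⟩ := hY
      obtain ⟨B₀, D₀, u, v, w, hB, hD, hTY⟩ := hY'
      obtain ⟨L', f', g', i', r', hT', hretr⟩ := star_retract f g h hT i r hir
      obtain ⟨E, a₁, b₁, c₁, M, N, a₂, b₂, c₂, eM, eN, hd₁, hd₂⟩ :=
        star_octa f' g' (r ≫ h) hT' u v w hTY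
      have hM : M ∈ thickN C a := thickN_iso a eM.symm hX
      have hN : N ∈ thickN C (b+1) := thickN_iso (b+1) eN.symm hB
      have hE : E ∈ thickN C (a + (b+1)) := thickN_star (b+1) a a₂ b₂ c₂ hd₂ hM hN
      have hL' : L' ∈ thickN C (a + b + 2) :=
        ⟨L', ⟨E, D₀, a₁, b₁, c₁, thickN_cast (by omega) hE, hD, hd₁⟩, 𝟙 L', 𝟙 L', id_comp _⟩
      exact thickN_cast (by omega) (thickN_retract (a+b+2) i' r' hretr hL')

lemma thickOne_mem_thickN {C C' : T} {l : ℕ} (hC : C ∈ thickN C' l) :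
    ∀ {X : T}, thickOne C X → X ∈ thickN C' l := by
  intro X hX
  induction hX with
  | base => exact hC
  | zero X h => exact thickN_zero l h
  | shift X n _ ih => exact thickN_shift l n ih
  | coprod X Y _ _ ih ih' => exact thickN_biprod l ih ih'
  | retract X Y i r hir _ ih => exact thickN_retract l i r hir ih
  | iso X Y e _ ih => exact thickN_iso l e ih

/-- The multiplicativity statement. -/
lemma thickN_mul [IsTriangulated T] {C C' M : T} : ∀ (n : ℕ) (l : ℕ),
    M ∈ thickN C n → C ∈ thickN C' l → M ∈ thickN C' (n * l)
  | 0, l, hM, hC => thickN_zero (0 * l) hM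
  | 1, l, hM, hC => thickN_cast (by omega) (thickOne_mem_thickN hC hM)
  | (n+2), l, hM, hC => by
      obtain ⟨L, ⟨M₁, M₂, f, g, h, hM₁, hM₂, hdist⟩, i, r, hir⟩ := hM
      have h₁ : M₁ ∈ thickN C' ((n+1) * l) := thickN_mul (n+1) l hM₁ hC
      have h₂ : M₂ ∈ thickN C' l := thickOne_mem_thickN hC hM₂
      have hL : L ∈ thickN C' ((n+1) * l + l) := thickN_star l ((n+1)*l) f g h hdist h₁ h₂
      exact thickN_cast (by ring) (thickN_retract _ i r hir hL)

lemma level_le {C M : T} {k : ℕ} (h : M ∈ thickN C k) : level C M ≤ k :=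
  sInf_le ⟨k, h, rfl⟩

lemma exists_level_eq {C M : T} {k : ℕ} (h : M ∈ thickN C k) :
    ∃ m : ℕ, M ∈ thickN C m ∧ level C M = m := by
  have hne : {n : ℕ | M ∈ thickN C n}.Nonempty := ⟨k, h⟩
  refine ⟨sInf {n : ℕ | M ∈ thickN C n}, Nat.sInf_mem hne, le_antisymm ?_ ?_⟩
  · exact sInf_le ⟨_, Nat.sInf_mem hne, rfl⟩
  · refine le_sInf ?_
    rintro x ⟨m, hm, rfl⟩
    exact Nat.cast_le.mpr (Nat.sInf_le hm)


/-- **Triangular inequality for levels** (Lemma 3.1 / cf. [S, 6.3.2(3)]):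
if `M ∈ thickⁿ(C)` and `C ∈ thickˡ(C′)` then `M ∈ thickⁿˡ(C′)`; equivalently
`level^{C′}(M) ≤ level^{C}(M) · level^{C′}(C)`. -/
theorem level_triangular_inequality [IsTriangulated T] (C C' M : T) (n l : ℕ)
    (hM : M ∈ thickN C n) (hC : C ∈ thickN C' l) :
    M ∈ thickN C' (n * l) ∧ level C' M ≤ level C M * level C' C := by
  refine ⟨thickN_mul n l hM hC, ?_⟩
  obtain ⟨n₀, hn₀, hn₀eq⟩ := exists_level_eq hM
  obtain ⟨l₀, hl₀, hl₀eq⟩ := exists_level_eq hC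
  rw [hn₀eq, hl₀eq]
  have := level_le (thickN_mul n₀ l₀ hn₀ hl₀)
  calc level C' M ≤ ((n₀ * l₀ : ℕ) : ℕ∞) := this
    _ = (n₀ : ℕ∞) * (l₀ : ℕ∞) := by exact_mod_cast rfl
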